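/- Let (Z,d) be a metric space, F ⊂ Z a subset, K ≥ 1 and N ∈ ℕ. Let (ξ_i)_{i∈I}, (r_i)_{i∈I}, (η_i)_{i∈I}, (s_i)_{i∈I} be families with ξ_i, η_i ∈ Z and r_i, s_i > 0 satisfying, for every i ∈ I: (1) B(ξ_i,r_i) ∩ F ≠ ∅; (2) B(η_i,s_i) ⊂ B(ξ_i,r_i); (3) B(η_i,2s_i) ∩ F = ∅; (4) B(ξ_i,r_i) ⊂ B(η_i,K s_i). Assume moreover the scale-wise bounded overlap condition: for every ζ ∈ Z and every j ∈ ℤ, the number of indices i with 2^{−j} ≤ s_i < 2^{−j+1} and ζ ∈ B(η_i,s_i) is at most N. Then there exists M ∈ ℕ, depending only on K and N, such that for every ζ ∈ Z the number of indices i ∈ I with ζ ∈ B(η_i,s_i) is at most M. (Bounded multiplicity claim at the heart of Lemma 4.1, which shows that for sequences supported above a porous set the Triebel–Lizorkin sequence norms ‖·‖_{J^s_{p,q}} are equivalent for all q.) -/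

import Mathlib

open Metric Set

lemma encard_biUnion_le' {α ι : Type*} (t : Finset ι) (f : ι → Set α) :
    (⋃ j ∈ t, f j).encard ≤ ∑ j ∈ t, (f j).encard := by
  classical
  induction t using Finset.induction with
  | empty => simp
  | @insert a u hx ih =>
    rw [Finset.set_biUnion_insert, Finset.sum_insert hx]
    exact (Set.encard_union_le _ _).trans (by gcongr)

/-- **Bounded multiplicity claim at the heart of Lemma 4.1.** For families of balls
arising from porosity (each ball `B(ξᵢ,rᵢ)` meets `F`, contains `B(ηᵢ,sᵢ)` with
`B(ηᵢ,2sᵢ)` disjoint from `F`, and is contained in `B(ηᵢ,Ksᵢ)`), a scale-wise bounded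
overlap of the balls `B(ηᵢ,sᵢ)` implies a global bounded overlap, with bound depending
only on `K` and `N`. -/
theorem bounded_multiplicity (K : ℝ) (hK : 1 ≤ K) (N : ℕ) :
    ∃ M : ℕ, ∀ (Z : Type) [MetricSpace Z], ∀ (F : Set Z) (I : Type)
      (ξ η : I → Z) (r s : I → ℝ),
      (∀ i : I, 0 < r i) → (∀ i : I, 0 < s i) →
      (∀ i : I, (ball (ξ i) (r i) ∩ F).Nonempty) →
      (∀ i : I, ball (η i) (s i) ⊆ ball (ξ i) (r i)) →
      (∀ i : I, ball (η i) (2 * s i) ∩ F = ∅) →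
      (∀ i : I, ball (ξ i) (r i) ⊆ ball (η i) (K * s i)) →
      (∀ (ζ : Z) (j : ℤ),
        ({i : I | (2 : ℝ) ^ (-j) ≤ s i ∧ s i < (2 : ℝ) ^ (-j + 1) ∧
          ζ ∈ ball (η i) (s i)}).encard ≤ (N : ℕ∞)) →
      ∀ ζ : Z, ({i : I | ζ ∈ ball (η i) (s i)}).encard ≤ (M : ℕ∞) := by
  set c : ℝ := Real.logb 2 (2 * K) with hc
  set L : ℤ := ⌈c⌉ with hL
  refine ⟨N * (2 * L.toNat + 1), ?_⟩
  intro Z _ F I ξ η r s hr hs hmeet hsub hdisj hsub' hover ζ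
  set S : Set I := {i : I | ζ ∈ ball (η i) (s i)} with hS
  rcases S.eq_empty_or_nonempty with hSe | ⟨i₀, hi₀⟩
  · simp [hSe]
  -- key comparability of scales
  have hkey : ∀ i ∈ S, ∀ i' ∈ S, s i < 2 * K * s i' := by
    intro i hi i' hi'
    obtain ⟨z, hz₁, hz₂⟩ := hmeet i'
    have hzη : dist z (η i') < K * s i' := by
      have := hsub' i' hz₁
      simpa [mem_ball] using this
    have hζη' : dist ζ (η i') < s i' := hi'
    have hζz : dist ζ z < s i' + K * s i' :=
      (dist_triangle ζ (η i') z).trans_lt (by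
        rw [dist_comm (η i') z]; exact add_lt_add hζη' hzη)
    have hznot : z ∉ ball (η i) (2 * s i) := by
      intro hz
      have : z ∈ ball (η i) (2 * s i) ∩ F := ⟨hz, hz₂⟩
      rw [hdisj i] at this; exact this
    have hd : 2 * s i ≤ dist (η i) z := by
      by_contra h
      exact hznot (by simpa [mem_ball, dist_comm] using lt_of_not_ge h)
    have hζη : dist (η i) ζ < s i := by simpa [hS, mem_ball, dist_comm] using hi
    have : 2 * s i < s i + (s i' + K * s i') :=
      hd.trans_lt ((dist_triangle (η i) ζ z).trans_lt (add_lt_add hζη hζz))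
    have h1 : s i < s i' + K * s i' := by linarith
    have : s i' + K * s i' ≤ 2 * K * s i' := by nlinarith [(hs i').le]
    linarith
  have h2K : (1:ℝ) < 2 := one_lt_two
  have hcpos : 1 ≤ c := by
    rw [hc]
    calc (1:ℝ) = Real.logb 2 2 := (Real.logb_self_eq_one h2K).symm
    _ ≤ Real.logb 2 (2 * K) := by
        exact Real.logb_le_logb_of_le h2K two_pos (by nlinarith)
  have hLpos : 0 ≤ L := by positivity
  -- floor comparison
  have hfloor : ∀ i ∈ S, ∀ i' ∈ S,
      ⌊Real.logb 2 (s i)⌋ ≤ ⌊Real.logb 2 (s i')⌋ + L := by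
    intro i hi i' hi'
    have h1 : Real.logb 2 (s i) < Real.logb 2 ((2 * K) * s i') :=
      Real.logb_lt_logb h2K (hs i) (hkey i hi i' hi')
    have h2 : Real.logb 2 ((2 * K) * s i') = c + Real.logb 2 (s i') := by
      rw [hc, Real.logb_mul (by positivity) (hs i').ne']
    have h3 : Real.logb 2 (s i) ≤ Real.logb 2 (s i') + (L : ℝ) := by
      have := Int.le_ceil c
      rw [h2] at h1; linarith
    calc ⌊Real.logb 2 (s i)⌋ ≤ ⌊Real.logb 2 (s i') + (L : ℝ)⌋ := Int.floor_le_floor h3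
    _ = ⌊Real.logb 2 (s i')⌋ + L := Int.floor_add_intCast _ _
  set m₀ : ℤ := ⌊Real.logb 2 (s i₀)⌋ with hm₀
  -- S is covered by the scale sets for j in a fixed interval
  have hcover : S ⊆ ⋃ j ∈ Finset.Icc (-m₀ - L) (-m₀ + L),
      {i : I | (2 : ℝ) ^ (-j) ≤ s i ∧ s i < (2 : ℝ) ^ (-j + 1) ∧
        ζ ∈ ball (η i) (s i)} := by
    intro i hi
    set m : ℤ := ⌊Real.logb 2 (s i)⌋ with hm
    refine Set.mem_biUnion (x := -m) ?_ ?_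
    · have h1 := hfloor i₀ hi₀ i hi
      have h2 := hfloor i hi i₀ hi₀
      exact Finset.mem_Icc.mpr (by omega)
    · have hle : (2 : ℝ) ^ (m : ℤ) ≤ s i := by
        have h1 : (m : ℝ) ≤ Real.logb 2 (s i) := Int.floor_le _
        have := (Real.le_logb_iff_rpow_le h2K (hs i)).mp h1
        rwa [Real.rpow_intCast] at this
      have hlt : s i < (2 : ℝ) ^ (m + 1 : ℤ) := by
        have h1 : Real.logb 2 (s i) < ((m + 1 : ℤ) : ℝ) := by
          push_cast; exact Int.lt_floor_add_one _
        have := (Real.logb_lt_iff_lt_rpow h2K (hs i)).mp h1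
        rwa [Real.rpow_intCast] at this
      refine ⟨by rwa [neg_neg], by rwa [neg_neg], hi⟩
  -- count
  calc S.encard ≤ (⋃ j ∈ Finset.Icc (-m₀ - L) (-m₀ + L),
      {i : I | (2 : ℝ) ^ (-j) ≤ s i ∧ s i < (2 : ℝ) ^ (-j + 1) ∧
        ζ ∈ ball (η i) (s i)}).encard := Set.encard_mono hcover
  _ ≤ ∑ j ∈ Finset.Icc (-m₀ - L) (-m₀ + L),
      ({i : I | (2 : ℝ) ^ (-j) ≤ s i ∧ s i < (2 : ℝ) ^ (-j + 1) ∧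
        ζ ∈ ball (η i) (s i)}).encard := encard_biUnion_le' _ _
  _ ≤ ∑ _j ∈ Finset.Icc (-m₀ - L) (-m₀ + L), (N : ℕ∞) :=
      Finset.sum_le_sum fun j _ => hover ζ j
  _ = ((Finset.Icc (-m₀ - L) (-m₀ + L)).card : ℕ∞) * N := by
      rw [Finset.sum_const, nsmul_eq_mul]
  _ ≤ (↑(N * (2 * L.toNat + 1)) : ℕ∞) := by
      have hcard : (Finset.Icc (-m₀ - L) (-m₀ + L)).card = 2 * L.toNat + 1 := by
        rw [Int.card_Icc]; omega
      rw [hcard]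
      push_cast
      rw [mul_comm]
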